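/- Let N, M, d, K be natural numbers, H an N×M complex matrix, C an N×N positive definite complex matrix, k ∈ {1,…,K}, and W_j, W̄_j M×d complex matrices for j = 1,…,K. Define S = H W_k (H W_k)ᴴ, D = C + ∑_{j≠k} H W_j (H W_j)ᴴ, S̄ = H W̄_k (H W̄_k)ᴴ, and D̄ = C + ∑_{j≠k} H W̄_j (H W̄_j)ᴴ. Then Re Tr(I − D⁻¹ S) ≤ Re Tr(I + D̄⁻¹ S̄ D̄⁻¹ D) − 2 Re Tr(D̄⁻¹ H W̄_k W_kᴴ Hᴴ). -/

import Mathlib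

open Matrix Finset ComplexOrder

lemma trace_re_nonneg_of_posSemidef {n : ℕ} {A : Matrix (Fin n) (Fin n) ℂ}
    (h : A.PosSemidef) : 0 ≤ (Matrix.trace A).re := by
  have hdiag : ∀ i, 0 ≤ A i i := fun i => by
    exact h.diag_nonneg
  have : (Matrix.trace A).re = ∑ i, (A i i).re := by
    simp [Matrix.trace, Matrix.diag, Complex.re_sum]
  rw [this]
  exact Finset.sum_nonneg fun i _ => (Complex.le_def.1 (hdiag i)).1

/-- Quadratic convex upper bound for the MMSE mean square error (Lemma 4 of the paper):
with `S = HWₖ(HWₖ)ᴴ`, `D = C + ∑_{j≠k} HWⱼ(HWⱼ)ᴴ` and the corresponding barred quantities,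
`Re Tr(I − D⁻¹S) ≤ Re Tr(I + D̄⁻¹S̄D̄⁻¹D) − 2 Re Tr(D̄⁻¹ H W̄ₖ Wₖᴴ Hᴴ)`. -/
theorem stmt_9 (N M d K : ℕ) (H : Matrix (Fin N) (Fin M) ℂ)
    (C : Matrix (Fin N) (Fin N) ℂ) (hC : C.PosDef) (k : Fin K)
    (W Wb : Fin K → Matrix (Fin M) (Fin d) ℂ)
    (S D Sb Db : Matrix (Fin N) (Fin N) ℂ)
    (hS : S = H * W k * (H * W k)ᴴ)
    (hD : D = C + ∑ j ∈ Finset.univ.erase k, H * W j * (H * W j)ᴴ)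
    (hSb : Sb = H * Wb k * (H * Wb k)ᴴ)
    (hDb : Db = C + ∑ j ∈ Finset.univ.erase k, H * Wb j * (H * Wb j)ᴴ) :
    (Matrix.trace (1 - D⁻¹ * S)).re ≤
      (Matrix.trace (1 + Db⁻¹ * Sb * Db⁻¹ * D)).re -
        2 * (Matrix.trace (Db⁻¹ * H * Wb k * (W k)ᴴ * Hᴴ)).re := by
  -- positive definiteness of D and Db
  have hsum : ∀ (V : Fin K → Matrix (Fin M) (Fin d) ℂ),
      (∑ j ∈ Finset.univ.erase k, H * V j * (H * V j)ᴴ).PosSemidef := by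
    intro V
    exact Finset.sum_induction _ Matrix.PosSemidef (fun a b ha hb => ha.add hb)
      Matrix.PosSemidef.zero (fun j _ => Matrix.posSemidef_self_mul_conjTranspose _)
  have hDpd : D.PosDef := hD ▸ hC.add_posSemidef (hsum W)
  have hDbpd : Db.PosDef := hDb ▸ hC.add_posSemidef (hsum Wb)
  have hterm : Db⁻¹ * H * Wb k * (W k)ᴴ * Hᴴ = Db⁻¹ * (H * Wb k) * (H * W k)ᴴ := by
    rw [Matrix.conjTranspose_mul]; simp [Matrix.mul_assoc]
  rw [hterm, hS, hSb]
  obtain ⟨A, hA⟩ : ∃ X, H * W k = X := ⟨_, rfl⟩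
  obtain ⟨Ab, hAb⟩ : ∃ X, H * Wb k = X := ⟨_, rfl⟩
  rw [hA, hAb]
  clear hterm hS hSb hA hAb hD hDb
  have hDiH : (D⁻¹)ᴴ = D⁻¹ := hDpd.isHermitian.inv
  have hDbiH : (Db⁻¹)ᴴ = Db⁻¹ := hDbpd.isHermitian.inv
  have hDDi : D * D⁻¹ = 1 :=
    Matrix.mul_nonsing_inv D ((Matrix.isUnit_iff_isUnit_det D).1 hDpd.isUnit)
  have hDiD : D⁻¹ * D = 1 :=
    Matrix.nonsing_inv_mul D ((Matrix.isUnit_iff_isUnit_det D).1 hDpd.isUnit)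
  have hc1 : ∀ Z : Matrix (Fin N) (Fin d) ℂ, D * (D⁻¹ * Z) = Z := fun Z => by
    rw [← Matrix.mul_assoc, hDDi, Matrix.one_mul]
  have hc2 : ∀ Z : Matrix (Fin N) (Fin d) ℂ, D⁻¹ * (D * Z) = Z := fun Z => by
    rw [← Matrix.mul_assoc, hDiD, Matrix.one_mul]
  have hpsd : ((Db⁻¹ * Ab - D⁻¹ * A)ᴴ * D * (Db⁻¹ * Ab - D⁻¹ * A)).PosSemidef :=
    hDpd.posSemidef.conjTranspose_mul_mul_same _
  have h0 : 0 ≤ (Matrix.trace ((Db⁻¹ * Ab - D⁻¹ * A)ᴴ * D * (Db⁻¹ * Ab - D⁻¹ * A))).re :=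
    trace_re_nonneg_of_posSemidef hpsd
  have hXH : (Db⁻¹ * Ab - D⁻¹ * A)ᴴ = Abᴴ * Db⁻¹ - Aᴴ * D⁻¹ := by
    rw [Matrix.conjTranspose_sub, Matrix.conjTranspose_mul, Matrix.conjTranspose_mul,
      hDiH, hDbiH]
  -- cyclic trace identities
  have ht1 : Matrix.trace (Abᴴ * (Db⁻¹ * (D * (Db⁻¹ * Ab)))) =
      Matrix.trace (Db⁻¹ * (Ab * Abᴴ) * Db⁻¹ * D) := by
    rw [show Abᴴ * (Db⁻¹ * (D * (Db⁻¹ * Ab))) = (Abᴴ * Db⁻¹ * D) * (Db⁻¹ * Ab) by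
      simp [Matrix.mul_assoc], Matrix.trace_mul_comm,
      show Db⁻¹ * Ab * (Abᴴ * Db⁻¹ * D) = Db⁻¹ * (Ab * Abᴴ) * Db⁻¹ * D by
      simp [Matrix.mul_assoc]]
  have ht2 : Matrix.trace (Aᴴ * (Db⁻¹ * Ab)) = Matrix.trace (Db⁻¹ * Ab * Aᴴ) :=
    Matrix.trace_mul_comm _ _
  have ht3 : Matrix.trace (Abᴴ * (Db⁻¹ * A)) = Matrix.trace (Db⁻¹ * A * Abᴴ) :=
    Matrix.trace_mul_comm _ _
  have ht4 : Matrix.trace (Aᴴ * (D⁻¹ * A)) = Matrix.trace (D⁻¹ * (A * Aᴴ)) := by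
    rw [Matrix.trace_mul_comm, Matrix.mul_assoc]
  have hexp : Matrix.trace ((Db⁻¹ * Ab - D⁻¹ * A)ᴴ * D * (Db⁻¹ * Ab - D⁻¹ * A)) =
      Matrix.trace (Db⁻¹ * (Ab * Abᴴ) * Db⁻¹ * D)
        - Matrix.trace (Db⁻¹ * Ab * Aᴴ)
        - Matrix.trace (Db⁻¹ * A * Abᴴ)
        + Matrix.trace (D⁻¹ * (A * Aᴴ)) := by
    rw [hXH]
    simp only [Matrix.sub_mul, Matrix.mul_sub, Matrix.mul_assoc, hc1, hc2]
    simp only [Matrix.trace_sub]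
    rw [ht1, ht2, ht3, ht4]
    simp only [Matrix.mul_assoc]
    ring
  -- conjugate-pair real parts
  have hconj : (Matrix.trace (Db⁻¹ * A * Abᴴ)).re = (Matrix.trace (Db⁻¹ * Ab * Aᴴ)).re := by
    have hH : (Db⁻¹ * Ab * Aᴴ)ᴴ = A * (Abᴴ * Db⁻¹) := by
      rw [Matrix.conjTranspose_mul, Matrix.conjTranspose_mul, hDbiH,
        Matrix.conjTranspose_conjTranspose]
    have h1 : Matrix.trace (A * (Abᴴ * Db⁻¹)) = star (Matrix.trace (Db⁻¹ * Ab * Aᴴ)) := by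
      rw [← hH, Matrix.trace_conjTranspose]
    have h2 : Matrix.trace (Db⁻¹ * A * Abᴴ) = Matrix.trace (A * (Abᴴ * Db⁻¹)) := by
      rw [Matrix.trace_mul_cycle Db⁻¹ A Abᴴ, Matrix.trace_mul_cycle Abᴴ Db⁻¹ A,
        Matrix.mul_assoc]
    rw [h2, h1, Complex.star_def, Complex.conj_re]
  have goal_eq : (Matrix.trace (1 + Db⁻¹ * (Ab * Abᴴ) * Db⁻¹ * D)).re -
      2 * (Matrix.trace (Db⁻¹ * Ab * Aᴴ)).re - (Matrix.trace (1 - D⁻¹ * (A * Aᴴ))).re =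
      (Matrix.trace ((Db⁻¹ * Ab - D⁻¹ * A)ᴴ * D * (Db⁻¹ * Ab - D⁻¹ * A))).re := by
    rw [hexp, Matrix.trace_add, Matrix.trace_sub]
    simp only [Complex.add_re, Complex.sub_re]
    rw [hconj]
    ring
  linarith [goal_eq ▸ h0]
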